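/- Let θ ∈ ℕ and x ∈ ℕ. Let C denote the set of functions A : {0,…,θ} → ℤ with A(0) = x and A(u+1) − A(u) ∈ {−1,0,1} for all 0 ≤ u ≤ θ−1, and let C₊ ⊆ C be the subset of nonnegative such functions. For A ∈ C define the discrete Skorokhod map Γ_A(u) := A(u) + max_{0 ≤ v ≤ u} max(−A(v), 0), and define H₀(A) := #{0 ≤ u ≤ θ−1 : A(u) = A(u+1) = 0}. Then for every A ∈ C₊, the number of functions Ã ∈ C with Γ_Ã = A is exactly 2^{H₀(A)}. -/

import Mathlib

/-- The discrete Skorokhod reflection map of a path `A : {0,…,θ} → ℤ`: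
`Γ_A(u) = A(u) + max_{0 ≤ v ≤ u} max(−A(v), 0)`. -/
def skorokhodMap {θ : ℕ} (A : Fin (θ + 1) → ℤ) (u : Fin (θ + 1)) : ℤ :=
  A u + (Finset.Iic u).sup' Finset.nonempty_Iic (fun v => max (-(A v)) 0)

namespace SkoAux
variable {θ : ℕ}

def cum (f : Fin θ → ℤ) (u : Fin (θ + 1)) : ℤ :=
  ∑ v ∈ Finset.univ.filter (fun v : Fin θ => (v : ℕ) < (u : ℕ)), f v

lemma cum_zero (f : Fin θ → ℤ) : cum f 0 = 0 := by
  simp [cum]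

lemma cum_succ (f : Fin θ → ℤ) (u : Fin θ) :
    cum f u.succ = cum f u.castSucc + f u := by
  have h : Finset.univ.filter (fun v : Fin θ => (v : ℕ) < ((u.succ : Fin (θ+1)) : ℕ)) =
      insert u (Finset.univ.filter (fun v : Fin θ => (v : ℕ) < ((u.castSucc : Fin (θ+1)) : ℕ))) := by
    ext v
    simp only [Finset.mem_filter, Finset.mem_univ, true_and, Finset.mem_insert,
      Fin.val_succ, Fin.coe_castSucc, Fin.ext_iff]
    omega
  rw [cum, h, Finset.sum_insert (by simp), cum, add_comm]

lemma cum_mono {f : Fin θ → ℤ} (hf : ∀ v, 0 ≤ f v) {u w : Fin (θ+1)} (h : u ≤ w) :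
    cum f u ≤ cum f w := by
  apply Finset.sum_le_sum_of_subset_of_nonneg
  · intro v hv
    simp only [Finset.mem_filter, Finset.mem_univ, true_and] at hv ⊢
    exact lt_of_lt_of_le hv (Fin.le_def.mp h)
  · intro v _ _; exact hf v

lemma cum_nonneg {f : Fin θ → ℤ} (hf : ∀ v, 0 ≤ f v) (u : Fin (θ+1)) : 0 ≤ cum f u := by
  have h := cum_mono hf (Fin.zero_le u)
  rwa [cum_zero] at h

lemma eq_of_step_eq {g h : Fin (θ+1) → ℤ} (h0 : g 0 = h 0)
    (hs : ∀ v : Fin θ, g v.succ - g v.castSucc = h v.succ - h v.castSucc) :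
    ∀ u, g u = h u := by
  intro u
  induction u using Fin.induction with
  | zero => exact h0
  | succ v ih => have := hs v; linarith

lemma castSucc_le_succ' (v : Fin θ) : (v.castSucc : Fin (θ+1)) ≤ v.succ := by
  rw [Fin.le_def]
  simp only [Fin.coe_castSucc, Fin.val_succ]
  omega

end SkoAux

open SkoAux in
set_option maxHeartbeats 1000000 in
/-- For a nonnegative path `A` started at `x` with increments in
`{-1,0,1}`, the number of paths `B` started at `x` with increments in `{-1,0,1}` whose
Skorokhod reflection equals `A` is exactly `2 ^ H₀(A)`, where `H₀(A)` is the number of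
horizontal steps of `A` at level `0`. -/
theorem card_skorokhod_preimage (θ x : ℕ) (A : Fin (θ + 1) → ℤ)
    (hA0 : A 0 = (x : ℤ))
    (hAstep : ∀ u : Fin θ, A u.succ - A u.castSucc = -1 ∨
      A u.succ - A u.castSucc = 0 ∨ A u.succ - A u.castSucc = 1)
    (hApos : ∀ u, 0 ≤ A u) :
    Nat.card {B : Fin (θ + 1) → ℤ //
        (B 0 = (x : ℤ) ∧ ∀ u : Fin θ, B u.succ - B u.castSucc = -1 ∨
          B u.succ - B u.castSucc = 0 ∨ B u.succ - B u.castSucc = 1) ∧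
        (∀ u, skorokhodMap B u = A u)} =
      2 ^ ((Finset.univ.filter
        (fun u : Fin θ => A u.castSucc = 0 ∧ A u.succ = 0)).card) := by
  classical
  set E := {u : Fin θ // A u.castSucc = 0 ∧ A u.succ = 0} with hE
  set f : (E → Bool) → Fin θ → ℤ := fun ε v =>
    if h : A v.castSucc = 0 ∧ A v.succ = 0 then (if ε ⟨v, h⟩ then 1 else 0) else 0 with hfdef
  have hf01 : ∀ ε v, f ε v = 0 ∨ f ε v = 1 := by
    intro ε v
    simp only [hfdef]
    split
    · split
      · right; rfl
      · left; rfl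
    · left; rfl
  have hfnn : ∀ ε v, 0 ≤ f ε v := by
    intro ε v; rcases hf01 ε v with h | h <;> omega
  have hfS : ∀ ε v, f ε v ≠ 0 → A v.castSucc = 0 ∧ A v.succ = 0 := by
    intro ε v h
    by_contra hc
    simp only [hfdef, dif_neg hc] at h
    exact h rfl
  set Bf : (E → Bool) → Fin (θ+1) → ℤ := fun ε u => A u - cum (f ε) u with hBfdef
  have hBfval : ∀ ε u, Bf ε u = A u - cum (f ε) u := fun ε u => rfl
  have prop1 : ∀ ε, Bf ε 0 = (x : ℤ) := by
    intro ε
    rw [hBfval, cum_zero, hA0]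
    ring
  have prop2 : ∀ ε (u : Fin θ), Bf ε u.succ - Bf ε u.castSucc = -1 ∨
      Bf ε u.succ - Bf ε u.castSucc = 0 ∨ Bf ε u.succ - Bf ε u.castSucc = 1 := by
    intro ε u
    have hc := cum_succ (f ε) u
    have h1 := hBfval ε u.succ
    have h2 := hBfval ε u.castSucc
    rcases hf01 ε u with h | h
    · have hst := hAstep u
      omega
    · have hs := hfS ε u (by omega)
      have hs1 := hs.1
      have hs2 := hs.2
      omega
  have prop3 : ∀ ε (u : Fin (θ+1)), skorokhodMap (Bf ε) u = A u := by
    intro ε u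
    have hkey : (Finset.Iic u).sup' Finset.nonempty_Iic (fun v => max (-(Bf ε v)) 0)
        = cum (f ε) u := by
      apply le_antisymm
      · apply Finset.sup'_le
        intro v hv
        have h1 : cum (f ε) v ≤ cum (f ε) u := cum_mono (hfnn ε) (Finset.mem_Iic.mp hv)
        have h2 := hApos v
        have h3 := cum_nonneg (hfnn ε) u
        have h4 := hBfval ε v
        rw [max_le_iff]
        constructor <;> omega
      · rcases eq_or_lt_of_le (cum_nonneg (hfnn ε) u) with h0 | h0
        · have hmem : (0 : Fin (θ+1)) ∈ Finset.Iic u := Finset.mem_Iic.mpr (Fin.zero_le u)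
          have hls := Finset.le_sup' (fun v => max (-(Bf ε v)) 0) hmem
          have h4 : (0:ℤ) ≤ max (-(Bf ε 0)) 0 := le_max_right _ _
          omega
        · set T := Finset.univ.filter (fun w : Fin θ => (w : ℕ) < (u : ℕ) ∧ f ε w ≠ 0) with hT
          have hTne : T.Nonempty := by
            by_contra h
            have hz : cum (f ε) u = 0 := by
              rw [cum]
              apply Finset.sum_eq_zero
              intro v hv
              simp only [Finset.mem_filter, Finset.mem_univ, true_and] at hv
              by_contra hne
              apply h
              refine ⟨v, ?_⟩
              simp only [hT, Finset.mem_filter, Finset.mem_univ, true_and]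
              exact ⟨hv, hne⟩
            omega
          set w := T.max' hTne with hw
          have hwmem := T.max'_mem hTne
          rw [← hw] at hwmem
          simp only [hT, Finset.mem_filter, Finset.mem_univ, true_and] at hwmem
          have hA0' : A w.succ = 0 := (hfS ε w hwmem.2).2
          have hcumeq : cum (f ε) w.succ = cum (f ε) u := by
            rw [cum, cum]
            apply Finset.sum_subset
            · intro v hv
              simp only [Finset.mem_filter, Finset.mem_univ, true_and, Fin.val_succ] at hv ⊢
              omega
            · intro v hv hnv
              simp only [Finset.mem_filter, Finset.mem_univ, true_and, Fin.val_succ] at hv hnv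
              by_contra hne
              have hvT : v ∈ T := by
                simp only [hT, Finset.mem_filter, Finset.mem_univ, true_and]
                exact ⟨hv, hne⟩
              have hle := T.le_max' v hvT
              rw [← hw] at hle
              have := Fin.le_def.mp hle
              omega
          have hsle : w.succ ≤ u := by
            rw [Fin.le_def]
            simp only [Fin.val_succ]
            omega
          have hls := Finset.le_sup' (fun v => max (-(Bf ε v)) 0) (Finset.mem_Iic.mpr hsle)
          have hval : max (-(Bf ε w.succ)) 0 = cum (f ε) u := by
            rw [hBfval, hA0', hcumeq]
            simp only [zero_sub, neg_neg]
            exact max_eq_left (le_of_lt h0)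
          omega
    rw [skorokhodMap, hkey, hBfval]
    ring
  set F : (E → Bool) → {B : Fin (θ + 1) → ℤ //
        (B 0 = (x : ℤ) ∧ ∀ u : Fin θ, B u.succ - B u.castSucc = -1 ∨
          B u.succ - B u.castSucc = 0 ∨ B u.succ - B u.castSucc = 1) ∧
        (∀ u, skorokhodMap B u = A u)} :=
    fun ε => ⟨Bf ε, ⟨prop1 ε, prop2 ε⟩, prop3 ε⟩ with hF
  have Finj : Function.Injective F := by
    intro ε ε' h
    have hB : Bf ε = Bf ε' := congrArg Subtype.val h
    have hcum : ∀ u, cum (f ε) u = cum (f ε') u := by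
      intro u
      have h1 := congrFun hB u
      rw [hBfval, hBfval] at h1
      omega
    have hfeq : ∀ v : Fin θ, f ε v = f ε' v := by
      intro v
      have h1 := cum_succ (f ε) v
      have h2 := cum_succ (f ε') v
      have h3 := hcum v.succ
      have h4 := hcum v.castSucc
      omega
    funext e
    rcases e with ⟨v, hv⟩
    have heq := hfeq v
    simp only [hfdef, dif_pos hv] at heq
    cases h1 : ε ⟨v, hv⟩ <;> cases h2 : ε' ⟨v, hv⟩
    · rfl
    · rw [h1, h2] at heq; norm_num at heq
    · rw [h1, h2] at heq; norm_num at heq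
    · rfl
  have Fsurj : Function.Surjective F := by
    rintro ⟨B, ⟨hB0, hBstep⟩, hΓ⟩
    set ε : E → Bool := fun e => decide (B e.1.succ - B e.1.castSucc = -1) with hεdef
    set N : Fin (θ+1) → ℤ := fun u => A u - B u with hNdef
    have hNval : ∀ u, N u = A u - B u := fun u => rfl
    have hNg : ∀ u, N u = (Finset.Iic u).sup' Finset.nonempty_Iic
        (fun v => max (-(B v)) 0) := by
      intro u
      have h1 := hΓ u
      rw [skorokhodMap] at h1
      rw [hNval]
      omega
    have hgleN : ∀ u, max (-(B u)) 0 ≤ N u := by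
      intro u
      rw [hNg u]
      exact Finset.le_sup' (fun v => max (-(B v)) 0) (Finset.mem_Iic.mpr le_rfl)
    have hNmono : ∀ {a b : Fin (θ+1)}, a ≤ b → N a ≤ N b := by
      intro a b hab
      rw [hNg a, hNg b]
      apply Finset.sup'_le
      intro v hv
      exact Finset.le_sup' (fun v => max (-(B v)) 0)
        (Finset.mem_Iic.mpr (le_trans (Finset.mem_Iic.mp hv) hab))
    have hNsucc : ∀ v : Fin θ, N v.succ = max (max (-(B v.succ)) 0) (N v.castSucc) := by
      intro v
      apply le_antisymm
      · rw [hNg v.succ]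
        apply Finset.sup'_le
        intro w hw
        rw [Finset.mem_Iic] at hw
        rcases eq_or_ne w v.succ with rfl | hne
        · exact le_max_left _ _
        · have hwc : w ≤ v.castSucc := by
            have h1 : (w : ℕ) ≤ (v : ℕ) + 1 := by simpa [Fin.le_def] using hw
            have h2 : (w : ℕ) ≠ (v : ℕ) + 1 := by
              intro hh
              exact hne (Fin.ext (by simpa using hh))
            rw [Fin.le_def]
            simp only [Fin.coe_castSucc]
            omega
          exact le_trans (le_trans (hgleN w) (hNmono hwc)) (le_max_right _ _)
      · exact max_le (hgleN v.succ) (hNmono (castSucc_le_succ' v))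
    have hstep : ∀ v : Fin θ, f ε v = N v.succ - N v.castSucc := by
      intro v
      have hgc := hgleN v.castSucc
      have hBc : -(B v.castSucc) ≤ N v.castSucc := le_trans (le_max_left _ _) hgc
      have hNc0 : (0:ℤ) ≤ N v.castSucc := le_trans (le_max_right _ _) hgc
      have hmono : N v.castSucc ≤ N v.succ := hNmono (castSucc_le_succ' v)
      have hBs : -(B v.succ) ≤ N v.succ := le_trans (le_max_left _ _) (hgleN v.succ)
      have h3 : N v.succ = -(B v.succ) ∨ N v.succ = N v.castSucc := by
        have h := hNsucc v
        rcases max_choice (max (-(B v.succ)) 0) (N v.castSucc) with h1 | h1 <;>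
          rw [h1] at h
        · rcases max_choice (-(B v.succ)) 0 with h2 | h2 <;> rw [h2] at h
          · left; exact h
          · right; omega
        · right; exact h
      have hAc := hNval v.castSucc
      have hAs := hNval v.succ
      have hd' := hBstep v
      by_cases hS : A v.castSucc = 0 ∧ A v.succ = 0
      · by_cases hd : B v.succ - B v.castSucc = -1
        · have hf1 : f ε v = 1 := by
            simp only [hfdef, dif_pos hS, hεdef]
            simp [hd]
          rcases h3 with h3 | h3 <;> omega
        · have hf0 : f ε v = 0 := by
            simp only [hfdef, dif_pos hS, hεdef]
            simp [hd]
          rcases h3 with h3 | h3 <;> omega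
      · have hf0 : f ε v = 0 := by simp only [hfdef, dif_neg hS]
        rcases h3 with h3 | h3 <;> omega
    refine ⟨ε, ?_⟩
    have hcumN : ∀ u, cum (f ε) u = N u := by
      apply eq_of_step_eq
      · rw [cum_zero, hNval]
        omega
      · intro v
        have h1 := cum_succ (f ε) v
        have h2 := hstep v
        omega
    simp only [hF]
    apply Subtype.ext
    funext u
    show Bf ε u = B u
    rw [hBfval, hcumN u, hNval]
    ring
  rw [← Nat.card_eq_of_bijective F ⟨Finj, Fsurj⟩, Nat.card_fun]
  congr 1
  · simp [Nat.card_eq_fintype_card]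
  · rw [Nat.card_eq_fintype_card]
    simp only [hE]
    rw [Fintype.card_subtype]
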